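/- Change of variables for quantile integrals: let F, G be cdfs on ℝ, Y = F^{-1}(U) with U ~ Uniform[0,1]. Then ∫₀¹ [1{U ≤ t} − t] G^{-1}(t) dF^{-1}(t) = ∫_{−∞}^{∞} [1{Y ≤ u} − F(u)] G^{-1}(F(u)) du. -/

import Mathlib

open MeasureTheory Set Filter

private lemma galois_aux {F : ℝ → ℝ} (hFmono : Monotone F)
    (hFrc : ∀ x, ContinuousWithinAt F (Set.Ici x) x)
    (hF0 : Tendsto F atBot (nhds 0)) (hF1 : Tendsto F atTop (nhds 1))
    {c : ℝ} (hc0 : 0 < c) (hc1 : c < 1) (u : ℝ) :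
    sInf {x | c ≤ F x} ≤ u ↔ c ≤ F u := by
  have hne : {x | c ≤ F x}.Nonempty := by
    obtain ⟨x, hx⟩ := (hF1.eventually (eventually_gt_nhds hc1)).exists
    exact ⟨x, hx.le⟩
  have hbdd : BddBelow {x | c ≤ F x} := by
    obtain ⟨x₀, hx₀⟩ := (hF0.eventually (eventually_lt_nhds hc0)).exists
    exact ⟨x₀, fun y hy => le_of_not_gt fun h => (hy.trans (hFmono h.le)).not_gt hx₀⟩
  constructor
  · intro h
    set Y := sInf {x | c ≤ F x} with hY
    have hFY : c ≤ F Y := by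
      have htd : Tendsto F (nhdsWithin Y (Ioi Y)) (nhds (F Y)) :=
        (hFrc Y).mono_left (nhdsWithin_mono _ Ioi_subset_Ici_self)
      refine ge_of_tendsto htd ?_
      filter_upwards [self_mem_nhdsWithin] with x hx
      obtain ⟨v, hv, hvx⟩ := exists_lt_of_csInf_lt hne hx
      exact hv.trans (hFmono hvx.le)
    exact hFY.trans (hFmono h)
  · intro h
    exact csInf_le hbdd h

private lemma key_Ioc {F : ℝ → ℝ} (hFmono : Monotone F)
    (hF0 : Tendsto F atBot (nhds 0)) (hF1 : Tendsto F atTop (nhds 1))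
    (ψ : StieltjesFunction ℝ) (hψ : ∀ t ∈ Set.Ioo (0:ℝ) 1, ψ t = sInf {x | t < F x})
    {p q : ℝ} (hp : 0 < p) (hq : q < 1) :
    ψ.measure (Ioc p q) = volume (F ⁻¹' Ioc p q) := by
  rcases le_or_gt q p with h | h
  · rw [Ioc_eq_empty h.not_gt]
    simp
  · have hp1 : p < 1 := h.trans hq
    have hq0 : 0 < q := hp.trans h
    have hψp := hψ p ⟨hp, hp1⟩
    have hψq := hψ q ⟨hq0, hq⟩
    have main : ∀ c : ℝ, 0 < c → c < 1 →
        (Ioi (sInf {x | c < F x}) ⊆ {x | c < F x}) ∧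
        ({x | c < F x} ⊆ Ici (sInf {x | c < F x})) := by
      intro c hc0 hc1
      have hne : {x | c < F x}.Nonempty := (hF1.eventually (eventually_gt_nhds hc1)).exists
      have hbdd : BddBelow {x | c < F x} := by
        obtain ⟨x₀, hx₀⟩ := (hF0.eventually (eventually_lt_nhds hc0)).exists
        exact ⟨x₀, fun y hy => le_of_not_gt fun hlt => (hy.trans_le (hFmono hlt.le)).not_gt hx₀⟩
      refine ⟨fun u hu => ?_, fun u hu => csInf_le hbdd hu⟩
      obtain ⟨v, hv, hvu⟩ := exists_lt_of_csInf_lt hne hu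
      exact hv.trans_le (hFmono hvu.le)
    obtain ⟨hp_lo, hp_hi⟩ := main p hp hp1
    obtain ⟨hq_lo, hq_hi⟩ := main q hq0 hq
    have hsub1 : Ioo (ψ p) (ψ q) ⊆ F ⁻¹' Ioc p q := by
      intro u hu
      refine ⟨hp_lo ?_, ?_⟩
      · rw [← hψp]; exact hu.1
      · by_contra hgt
        push_neg at hgt
        have : sInf {x | q < F x} ≤ u := hq_hi hgt
        rw [← hψq] at this
        exact this.not_gt hu.2
    have hsub2 : F ⁻¹' Ioc p q ⊆ Icc (ψ p) (ψ q) := by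
      intro u hu
      refine ⟨?_, ?_⟩
      · rw [hψp]; exact hp_hi hu.1
      · rw [hψq]
        refine le_of_not_gt fun hlt => ?_
        exact (hq_lo hlt).not_ge hu.2
    refine le_antisymm ?_ ?_
    · rw [ψ.measure_Ioc, ← Real.volume_Ioo]
      exact measure_mono hsub1
    · calc volume (F ⁻¹' Ioc p q) ≤ volume (Icc (ψ p) (ψ q)) := measure_mono hsub2
        _ = ENNReal.ofReal (ψ q - ψ p) := Real.volume_Icc
        _ = ψ.measure (Ioc p q) := (ψ.measure_Ioc p q).symm

theorem stmt_13 (F G : ℝ → ℝ)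
    (hFmono : Monotone F) (hFrc : ∀ x, ContinuousWithinAt F (Set.Ici x) x)
    (hF0 : Tendsto F atBot (nhds 0)) (hF1 : Tendsto F atTop (nhds 1))
    (hGmono : Monotone G) (hGrc : ∀ x, ContinuousWithinAt G (Set.Ici x) x)
    (hG0 : Tendsto G atBot (nhds 0)) (hG1 : Tendsto G atTop (nhds 1))
    (ψ : StieltjesFunction ℝ) (hψ : ∀ t ∈ Set.Ioo (0:ℝ) 1, ψ t = sInf {x | t < F x})
    (u₀ : ℝ) (hu₀ : u₀ ∈ Set.Ioo (0:ℝ) 1)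
    (hint : Integrable (fun u =>
      ((if sInf {x | u₀ ≤ F x} ≤ u then (1:ℝ) else 0) - F u) * sInf {x | F u ≤ G x})) :
    ∫ t in Set.Ioo (0:ℝ) 1,
        ((if u₀ ≤ t then (1:ℝ) else 0) - t) * sInf {x | t ≤ G x} ∂ψ.measure
      = ∫ u, ((if sInf {x | u₀ ≤ F x} ≤ u then (1:ℝ) else 0) - F u)
          * sInf {x | F u ≤ G x} := by
  have hFmeas : Measurable F := hFmono.measurable
  set A : Set ℝ := F ⁻¹' (Ioo 0 1) with hA_def
  have hA : MeasurableSet A := hFmeas measurableSet_Ioo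
  set μ₂ : Measure ℝ := Measure.map F (volume.restrict A) with hμ₂
  set f : ℝ → ℝ := fun t => ((if u₀ ≤ t then (1:ℝ) else 0) - t) * sInf {x | t ≤ G x} with hf_def
  set g : ℝ → ℝ := fun u => ((if sInf {x | u₀ ≤ F x} ≤ u then (1:ℝ) else 0) - F u)
      * sInf {x | F u ≤ G x} with hg_def
  -- measure equality
  have hdec : ∀ a b : ℝ, Ioc a b ∩ Ioo 0 1
      = ⋃ n : ℕ, Ioc (max a (1/(n+2 : ℝ))) (min b (1 - 1/(n+2 : ℝ))) := by
    intro a b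
    ext t
    simp only [mem_inter_iff, mem_Ioc, mem_Ioo, mem_iUnion]
    constructor
    · rintro ⟨⟨hat, htb⟩, ht0, ht1⟩
      obtain ⟨n, hn⟩ := exists_nat_one_div_lt (show (0:ℝ) < min t (1 - t) by
        exact lt_min ht0 (by linarith))
      have h2 : 1/((n:ℝ)+2) < min t (1 - t) := by
        refine lt_of_le_of_lt ?_ hn
        apply one_div_le_one_div_of_le
        · positivity
        · push_cast; linarith
      refine ⟨n, max_lt hat (h2.trans_le (min_le_left _ _)), le_min htb ?_⟩
      have := h2.trans_le (min_le_right _ _)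
      linarith
    · rintro ⟨n, h1, h2⟩
      have epos : (0:ℝ) < 1/((n:ℝ)+2) := by positivity
      have ht0 : 0 < t := lt_trans epos ((le_max_right a _).trans_lt h1)
      have htb := h2.trans (min_le_right _ _)
      exact ⟨⟨(le_max_left a _).trans_lt h1, h2.trans (min_le_left _ _)⟩, ht0, by linarith⟩
  have hmono2 : ∀ a b : ℝ, Monotone (fun n : ℕ =>
      Ioc (max a (1/(n+2 : ℝ))) (min b (1 - 1/(n+2 : ℝ)))) := by
    intro a b n m hnm
    have h1 : 1/((m:ℝ)+2) ≤ 1/((n:ℝ)+2) := by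
      apply one_div_le_one_div_of_le
      · positivity
      · push_cast
        have : (n:ℝ) ≤ m := Nat.cast_le.mpr hnm
        linarith
    exact Ioc_subset_Ioc (max_le_max le_rfl h1) (min_le_min le_rfl (by linarith))
  have key : ψ.measure.restrict (Ioo 0 1) = μ₂ := by
    refine Measure.ext_of_Ioc' _ _ (fun a b hab => ?_) (fun a b hab => ?_)
    · rw [Measure.restrict_apply measurableSet_Ioc]
      exact ((measure_mono inter_subset_left).trans_lt
        (by rw [ψ.measure_Ioc]; exact ENNReal.ofReal_lt_top)).ne
    · rw [Measure.restrict_apply measurableSet_Ioc, hμ₂,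
        Measure.map_apply hFmeas measurableSet_Ioc,
        Measure.restrict_apply (hFmeas measurableSet_Ioc), ← preimage_inter, hdec a b,
        preimage_iUnion,
        Directed.measure_iUnion (hmono2 a b).directed_le,
        Directed.measure_iUnion
          (Monotone.directed_le fun n m hnm => preimage_mono (hmono2 a b hnm))]
      refine iSup_congr fun n => ?_
      have epos : (0:ℝ) < 1/((n:ℝ)+2) := by positivity
      exact key_Ioc hFmono hF0 hF1 ψ hψ
        (lt_of_lt_of_le epos (le_max_right _ _))
        ((min_le_right _ _).trans_lt (by linarith))
  -- pointwise facts
  have hF_nonneg : ∀ u, 0 ≤ F u := fun u =>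
    le_of_tendsto hF0 (Filter.eventually_atBot.2 ⟨u, fun v hv => hFmono hv⟩)
  have hF_le_one : ∀ u, F u ≤ 1 := fun u =>
    ge_of_tendsto hF1 (Filter.eventually_atTop.2 ⟨u, fun v hv => hFmono hv⟩)
  have hG_nonneg : ∀ u, 0 ≤ G u := fun u =>
    le_of_tendsto hG0 (Filter.eventually_atBot.2 ⟨u, fun v hv => hGmono hv⟩)
  have galois_u₀ : ∀ u, (sInf {x | u₀ ≤ F x} ≤ u ↔ u₀ ≤ F u) :=
    galois_aux hFmono hFrc hF0 hF1 hu₀.1 hu₀.2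
  have hfg : ∀ u, f (F u) = g u := by
    intro u
    have h : (sInf {x | u₀ ≤ F x} ≤ u) = (u₀ ≤ F u) := propext (galois_u₀ u)
    simp only [hf_def, hg_def, h]
  have hg0 : ∀ u, u ∉ A → g u = 0 := by
    intro u hu
    simp only [hA_def, mem_preimage, mem_Ioo, not_and_or, not_lt] at hu
    rcases hu with h | h
    · have hFu : F u = 0 := le_antisymm h (hF_nonneg u)
      have huniv : {x | F u ≤ G x} = univ := eq_univ_of_forall fun x => hFu ▸ hG_nonneg x
      have hnb : ¬ BddBelow (univ : Set ℝ) := fun ⟨x, hx⟩ => by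
        have := hx (mem_univ (x - 1)); linarith
      simp only [hg_def, huniv, Real.sInf_of_not_bddBelow hnb, mul_zero]
    · have hFu : F u = 1 := le_antisymm (hF_le_one u) h
      have hind : sInf {x | u₀ ≤ F x} ≤ u := (galois_u₀ u).mpr (by rw [hFu]; exact hu₀.2.le)
      simp [hg_def, hind, hFu]
  -- measurability of f w.r.t. restricted measure
  have hGinvMono : MonotoneOn (fun t => sInf {x | t ≤ G x}) (Ioo 0 1) := by
    intro s hs t ht hst
    have hne : {x | t ≤ G x}.Nonempty := by
      obtain ⟨x, hx⟩ := (hG1.eventually (eventually_gt_nhds ht.2)).exists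
      exact ⟨x, hx.le⟩
    have hbdd : BddBelow {x | s ≤ G x} := by
      obtain ⟨x₀, hx₀⟩ := (hG0.eventually (eventually_lt_nhds hs.1)).exists
      exact ⟨x₀, fun y hy => le_of_not_gt fun hlt => (hy.trans (hGmono hlt.le)).not_gt hx₀⟩
    exact csInf_le_csInf hbdd hne fun x hx => hst.trans hx
  have hfAE : AEMeasurable f (ψ.measure.restrict (Ioo 0 1)) := by
    have h1 : AEMeasurable (fun t => sInf {x | t ≤ G x}) (ψ.measure.restrict (Ioo 0 1)) :=
      aemeasurable_restrict_of_monotoneOn measurableSet_Ioo hGinvMono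
    have h2 : Measurable (fun t : ℝ => ((if u₀ ≤ t then (1:ℝ) else 0) - t)) := by
      apply Measurable.sub _ measurable_id
      exact Measurable.ite (measurableSet_le measurable_const measurable_id)
        measurable_const measurable_const
    exact h2.aemeasurable.mul h1
  have hfASM : AEStronglyMeasurable f μ₂ := (key ▸ hfAE).aestronglyMeasurable
  calc ∫ t in Ioo (0:ℝ) 1, f t ∂ψ.measure
      = ∫ t, f t ∂μ₂ := by rw [← key]
    _ = ∫ u, f (F u) ∂(volume.restrict A) := integral_map hFmeas.aemeasurable hfASM
    _ = ∫ u in A, g u := by simp only [hfg]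
    _ = ∫ u, g u := setIntegral_eq_integral_of_forall_compl_eq_zero hg0
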